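/- Ky Fan's inequality for p = 1: if f is supermodular on a finite distributive lattice, then for any elements x₁, …, x_q, Σ_{i=1}^q f(x_i) ≤ Σ_{k=1}^q f(⋁ over all k-subsets {i₁<⋯<i_k} of the meets x_{i₁} ∧ ⋯ ∧ x_{i_k}). -/

import Mathlib

open Finset

namespace FanAux

variable {𝕃 : Type*} [DistribLattice 𝕃]

/-- Embed `𝕃` into `WithBot (WithTop 𝕃)` to have `⊥` and `⊤` available. -/
def e (a : 𝕃) : WithBot (WithTop 𝕃) := ((a : WithTop 𝕃) : WithBot (WithTop 𝕃))

lemma e_inj : Function.Injective (e (𝕃 := 𝕃)) := by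
  intro a b h
  simpa [e] using h

lemma e_sup (a b : 𝕃) : e (a ⊔ b) = e a ⊔ e b := by
  rw [e, e, e, WithTop.coe_sup, WithBot.coe_sup]

lemma e_inf (a b : 𝕃) : e (a ⊓ b) = e a ⊓ e b := by
  rw [e, e, e, WithTop.coe_inf, WithBot.coe_inf]

/-- `e` as a `SupHom`. -/
def eSup : SupHom 𝕃 (WithBot (WithTop 𝕃)) := ⟨e, e_sup⟩

open Classical in
noncomputable def g (f : 𝕃 → ℝ) : WithBot (WithTop 𝕃) → ℝ :=
  fun z => if h : ∃ a, e a = z then f h.choose else 0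

lemma g_e (f : 𝕃 → ℝ) (a : 𝕃) : g f (e a) = f a := by
  have h : ∃ b, e b = e a := ⟨a, rfl⟩
  simp only [g]
  rw [dif_pos h]
  exact congrArg f (e_inj h.choose_spec)

variable {ι : Type*} [DecidableEq ι]

/-- join over `k`-subsets of `T` of the meets, valued in `WithBot (WithTop 𝕃)`. -/
def Y (x : ι → 𝕃) (T : Finset ι) (k : ℕ) : WithBot (WithTop 𝕃) :=
  (T.powersetCard k).sup fun S => ((S.inf fun i => (x i : WithTop 𝕃) : WithTop 𝕃) : WithBot (WithTop 𝕃))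

variable (x : ι → 𝕃)

lemma Y_zero (T : Finset ι) : Y x T 0 = ((⊤ : WithTop 𝕃) : WithBot (WithTop 𝕃)) := by
  simp [Y, powersetCard_zero]

lemma Y_bot (T : Finset ι) {k : ℕ} (hk : T.card < k) : Y x T k = ⊥ := by
  rw [Y, powersetCard_eq_empty.mpr hk, sup_empty]

lemma Y_anti (T : Finset ι) (k : ℕ) : Y x T (k + 1) ≤ Y x T k := by
  apply Finset.sup_le
  intro S hS
  obtain ⟨hST, hcard⟩ := mem_powersetCard.mp hS
  obtain ⟨S', hS'S, hS'card⟩ := Finset.exists_subset_card_eq (s := S) (n := k) (by omega)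
  calc ((S.inf fun i => (x i : WithTop 𝕃) : WithTop 𝕃) : WithBot (WithTop 𝕃))
      ≤ ((S'.inf fun i => (x i : WithTop 𝕃) : WithTop 𝕃) : WithBot (WithTop 𝕃)) := by
        exact_mod_cast Finset.inf_mono hS'S
    _ ≤ _ := Finset.le_sup
        (f := fun S => ((S.inf fun i => (x i : WithTop 𝕃) : WithTop 𝕃) : WithBot (WithTop 𝕃)))
        (mem_powersetCard.mpr ⟨hS'S.trans hST, hS'card⟩)

lemma Y_insert {a : ι} {T : Finset ι} (ha : a ∉ T) (k : ℕ) :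
    Y x (insert a T) (k + 1) = Y x T (k + 1) ⊔ (Y x T k ⊓ e (x a)) := by
  rw [Y, powersetCard_succ_insert ha, sup_union, Y, Y, sup_image]
  congr 1
  rw [inf_comm, Finset.sup_inf_distrib_left]
  apply Finset.sup_congr rfl
  intro S _
  simp only [Function.comp_apply, Finset.inf_insert, WithTop.coe_inf, WithBot.coe_inf]
  rfl

lemma Y_mem_range (T : Finset ι) {k : ℕ} (h1 : 1 ≤ k) (h2 : k ≤ T.card) :
    ∃ z : 𝕃, e z = Y x T k := by
  have hP : (T.powersetCard k).Nonempty := powersetCard_nonempty.mpr h2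
  rw [Y, ← Finset.sup'_eq_sup hP]
  refine Finset.sup'_induction (p := fun w => ∃ z : 𝕃, e z = w) hP _ ?_ ?_
  · rintro u ⟨za, hza⟩ v ⟨zb, hzb⟩
    exact ⟨za ⊔ zb, by rw [e_sup, hza, hzb]⟩
  · intro S hS
    have hSne : S.Nonempty := Finset.card_pos.mp (by
      have := (mem_powersetCard.mp hS).2; omega)
    refine ⟨S.inf' hSne x, ?_⟩
    exact congrArg (fun t : WithTop 𝕃 => (t : WithBot (WithTop 𝕃))) (Finset.coe_inf' hSne x)

/-- Abstract telescoping inequality over `Icc 1 n`. -/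
lemma telescope (A B D : ℕ → ℝ) :
    ∀ n : ℕ, 1 ≤ n → (∀ k ∈ Icc 1 n, A k + B (k - 1) ≤ D k + B k) →
    B 0 + ∑ k ∈ Icc 1 n, A k ≤ ∑ k ∈ Icc 1 n, D k + B n := by
  intro n
  induction n with
  | zero => omega
  | succ m ih =>
    intro _ hk
    rcases Nat.eq_zero_or_pos m with rfl | hm
    · have h := hk 1 (by simp)
      simp only [Icc_self, sum_singleton] at *
      simp only [Nat.sub_self] at h
      linarith
    ·
      have IH := ih hm (fun k hk' => hk k (by simp_all [mem_Icc]; omega))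
      rw [Finset.sum_Icc_succ_top (by omega) A, Finset.sum_Icc_succ_top (by omega) D]
      have hlast := hk (m + 1) (by simp [mem_Icc])
      simp at hlast
      linarith

lemma main (f : 𝕃 → ℝ) (hf : ∀ a b : 𝕃, f a + f b ≤ f (a ⊔ b) + f (a ⊓ b)) :
    ∀ (T : Finset ι), T.Nonempty →
      ∑ i ∈ T, f (x i) ≤ ∑ k ∈ Icc 1 T.card, g f (Y x T k) := by
  intro T hT
  induction hT using Finset.Nonempty.cons_induction with
  | singleton a =>
    simp only [Finset.sum_singleton, Finset.card_singleton, Icc_self, Finset.sum_singleton]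
    have : Y x {a} 1 = e (x a) := by
      rw [show (1:ℕ) = Finset.card {a} from (card_singleton a).symm, Y, powersetCard_self]
      simp [e]
    rw [this, g_e]
  | cons a T haT hTne ih =>
    have hn : 1 ≤ T.card := Finset.card_pos.mpr hTne
    set n := T.card with hnn
    set c : WithBot (WithTop 𝕃) := e (x a) with hc
    -- witnesses
    have hrange : ∀ k, 1 ≤ k → k ≤ n → ∃ z : 𝕃, e z = Y x T k := fun k h1 h2 =>
      Y_mem_range x T h1 h2
    have hZ0c : Y x T 0 ⊓ c = c := by
      rw [Y_zero]
      exact inf_eq_right.mpr (le_trans le_top (le_of_eq (WithBot.coe_top).symm))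
    have hrange' : ∀ k, 1 ≤ k → k ≤ n → ∃ v : 𝕃, e v = Y x T (k - 1) ⊓ c := by
      intro k h1 h2
      rcases Nat.eq_or_lt_of_le h1 with h1' | h1'
      · exact ⟨x a, by rw [← h1', Nat.sub_self, hZ0c]⟩
      · obtain ⟨w, hw⟩ := hrange (k - 1) (by omega) (by omega)
        exact ⟨w ⊓ x a, by rw [e_inf, hw, hc]⟩
    -- the supermodular step
    have hstep : ∀ k ∈ Icc 1 n,
        g f (Y x T k) + g f (Y x T (k - 1) ⊓ c) ≤
          g f (Y x T k ⊔ (Y x T (k - 1) ⊓ c)) + g f (Y x T k ⊓ c) := by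
      intro k hk
      obtain ⟨h1, h2⟩ := mem_Icc.mp hk
      obtain ⟨u, hu⟩ := hrange k h1 h2
      obtain ⟨v, hv⟩ := hrange' k h1 h2
      have hanti : Y x T k ≤ Y x T (k - 1) := by
        have := Y_anti x T (k - 1)
        rwa [Nat.sub_add_cancel h1] at this
      have hmeet : Y x T k ⊓ (Y x T (k - 1) ⊓ c) = Y x T k ⊓ c := by
        rw [← inf_assoc, inf_eq_left.mpr hanti]
      have huv : u ⊓ v = u ⊓ x a := e_inj (by rw [e_inf, e_inf, hu, hv, hmeet, hc])
      rw [← hu, ← hv, ← e_sup, ← e_inf, g_e, g_e, g_e, g_e, ← huv]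
      exact hf u v
    -- telescoping
    have htel : g f (Y x T 0 ⊓ c) + ∑ k ∈ Icc 1 n, g f (Y x T k) ≤
        ∑ k ∈ Icc 1 n, g f (Y x T k ⊔ (Y x T (k - 1) ⊓ c)) + g f (Y x T n ⊓ c) :=
      telescope (fun k => g f (Y x T k)) (fun k => g f (Y x T k ⊓ c))
        (fun k => g f (Y x T k ⊔ (Y x T (k - 1) ⊓ c))) n hn hstep
    have hB0 : g f (Y x T 0 ⊓ c) = f (x a) := by rw [hZ0c, hc, g_e]
    rw [hB0] at htel
    -- identification of the new Y's
    have hYins : ∀ k ∈ Icc 1 (n + 1),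
        Y x (insert a T) k = Y x T k ⊔ (Y x T (k - 1) ⊓ c) := by
      intro k hk
      obtain ⟨h1, _⟩ := mem_Icc.mp hk
      obtain ⟨m, rfl⟩ := Nat.exists_eq_add_of_le h1
      have : 1 + m = m + 1 := by omega
      rw [this, Y_insert x haT m, Nat.add_sub_cancel]
    have hcard : (Finset.cons a T haT).card = n + 1 := by
      rw [Finset.card_cons]
    rw [Finset.sum_cons, hcard]
    calc f (x a) + ∑ i ∈ T, f (x i)
        ≤ f (x a) + ∑ k ∈ Icc 1 n, g f (Y x T k) := by linarith [ih]
      _ ≤ ∑ k ∈ Icc 1 n, g f (Y x T k ⊔ (Y x T (k - 1) ⊓ c)) + g f (Y x T n ⊓ c) := htel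
      _ = ∑ k ∈ Icc 1 (n + 1), g f (Y x T k ⊔ (Y x T (k - 1) ⊓ c)) := by
          rw [Finset.sum_Icc_succ_top (by omega)]
          have : Y x T (n + 1) = ⊥ := Y_bot x T (by omega)
          rw [this, bot_sup_eq, Nat.add_sub_cancel]
      _ = ∑ k ∈ Icc 1 (n + 1), g f (Y x (insert a T) k) := by
          refine (Finset.sum_congr rfl fun k hk => ?_).symm
          rw [hYins k hk]
      _ = ∑ k ∈ Icc 1 (n + 1), g f (Y x (Finset.cons a T haT) k) := by
          rw [Finset.cons_eq_insert]

lemma e_sup'_inf' {q : ℕ} (x : Fin q → 𝕃) (k : ℕ)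
    (H : (Finset.univ.powersetCard k : Finset (Finset (Fin q))).attach.Nonempty)
    (hS : ∀ s : {s // s ∈ (Finset.univ.powersetCard k : Finset (Finset (Fin q)))},
      s.1.Nonempty) :
    e ((Finset.univ.powersetCard k).attach.sup' H (fun s => s.1.inf' (hS s) x)) =
      Y x Finset.univ k := by
  rw [show (e : 𝕃 → WithBot (WithTop 𝕃)) = ⇑(eSup (𝕃 := 𝕃)) from rfl,
    map_finset_sup' (eSup (𝕃 := 𝕃)) H, Finset.sup'_eq_sup, Y]
  refine Eq.trans (Finset.sup_congr rfl fun s _ => ?_)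
    (Finset.sup_attach (Finset.univ.powersetCard k)
      (fun S => ((S.inf fun i => (x i : WithTop 𝕃) : WithTop 𝕃) : WithBot (WithTop 𝕃))))
  show e (s.1.inf' (hS s) x) = _
  exact congrArg (fun t : WithTop 𝕃 => (t : WithBot (WithTop 𝕃))) (Finset.coe_inf' (hS s) x)

end FanAux


/-- Ky Fan's inequality for `p = 1`: for a supermodular `f` on a distributive lattice
and elements `x 1, …, x q`,
`∑ i f(x i) ≤ ∑_{k=1}^q f(⋁ over k-subsets of the meets)`. -/
theorem fan_inequality_p_one {𝕃 : Type*} [DistribLattice 𝕃] (f : 𝕃 → ℝ)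
    (hf : ∀ a b : 𝕃, f a + f b ≤ f (a ⊔ b) + f (a ⊓ b))
    (q : ℕ) (hq : 1 ≤ q) (x : Fin q → 𝕃) :
    ∑ i, f (x i) ≤
      ∑ k ∈ (Finset.Icc 1 q).attach,
        f (((Finset.univ.powersetCard (k : ℕ)).attach).sup'
            (Finset.attach_nonempty_iff.mpr
              (Finset.powersetCard_nonempty.mpr
                (by simpa using (Finset.mem_Icc.mp k.2).2)))
            (fun s => s.1.inf'
              (Finset.card_pos.mp
                (by
                  have hs := (Finset.mem_powersetCard.mp s.2).2
                  have hk := (Finset.mem_Icc.mp k.2).1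
                  omega))
              x)) := by
  haveI : Nonempty (Fin q) := Fin.pos_iff_nonempty.mp hq
  have hmain := FanAux.main x f hf Finset.univ Finset.univ_nonempty
  rw [Finset.card_univ, Fintype.card_fin] at hmain
  refine le_trans hmain (le_of_eq ?_)
  rw [← Finset.sum_attach (Icc 1 q) (fun k => FanAux.g f (FanAux.Y x Finset.univ k))]
  refine Finset.sum_congr rfl fun k _ => ?_
  rw [← FanAux.e_sup'_inf' x (k : ℕ)
      (Finset.attach_nonempty_iff.mpr
        (Finset.powersetCard_nonempty.mpr
          (by simpa using (Finset.mem_Icc.mp k.2).2)))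
      (fun s => Finset.card_pos.mp
        (by
          have hs := (Finset.mem_powersetCard.mp s.2).2
          have hk := (Finset.mem_Icc.mp k.2).1
          omega)),
    FanAux.g_e]
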